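/- Let E be a nonzero finite-dimensional complex inner product space, let H₁ and H₂ be self-adjoint operators on E, and let S be a nonzero subspace of E such that H₂ x = 0 for every x ∈ S and ⟨x, H₂ x⟩ ≥ J‖x‖² for every x in the orthogonal complement of S, where J > 2‖H₁‖. Then λ₀(H₁|_S) − ‖H₁‖²/(J − 2‖H₁‖) ≤ λ₀(H₁ + H₂) ≤ λ₀(H₁|_S). -/

import Mathlib

/-- The smallest eigenvalue of a self-adjoint operator `A` on a nonzero
finite-dimensional complex inner ℂ product space, expressed as the infimum of the
Rayleigh quotient over unit vectors. -/
noncomputable def groundEnergy {E : Type*} [NormedAddCommGroup E] [InnerProductSpace ℂ E]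
    (A : E →L[ℂ] E) : ℝ :=
  ⨅ x : {x : E // ‖x‖ = 1}, (inner ℂ (x : E) (A (x : E)) : ℂ).re

/-- The infimum of the Rayleigh quotient of `A` over unit vectors lying in the
subspace `S`, i.e. the smallest eigenvalue of the restriction `A|_S`. -/
noncomputable def groundEnergyOn {E : Type*} [NormedAddCommGroup E] [InnerProductSpace ℂ E]
    (A : E →L[ℂ] E) (S : Submodule ℂ E) : ℝ :=
  ⨅ x : {x : E // x ∈ S ∧ ‖x‖ = 1}, (inner ℂ (x : E) (A (x : E)) : ℂ).re

section aux
variable {E : Type*} [NormedAddCommGroup E] [InnerProductSpace ℂ E]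

private lemma abs_re_inner_le (A : E →L[ℂ] E) (u v : E) :
    |(inner ℂ u (A v) : ℂ).re| ≤ ‖A‖ * ‖u‖ * ‖v‖ := by
  have h1 : |(inner ℂ u (A v) : ℂ).re| ≤ ‖(inner ℂ u (A v) : ℂ)‖ := Complex.abs_re_le_norm _
  have h2 : ‖(inner ℂ u (A v) : ℂ)‖ ≤ ‖u‖ * ‖A v‖ := norm_inner_le_norm u (A v)
  have h3 : ‖A v‖ ≤ ‖A‖ * ‖v‖ := A.le_opNorm v
  nlinarith [norm_nonneg u, norm_nonneg (A v), norm_nonneg A, norm_nonneg v]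

private lemma bddBelow_rayleigh (A : E →L[ℂ] E) :
    BddBelow (Set.range fun x : {x : E // ‖x‖ = 1} =>
      (inner ℂ (x : E) (A (x : E)) : ℂ).re) := by
  refine ⟨-‖A‖, ?_⟩
  rintro r ⟨⟨x, hx⟩, rfl⟩
  have h := abs_le.mp (abs_re_inner_le A x x)
  simp only [hx, mul_one] at h
  exact h.1

private lemma bddBelow_rayleighOn (A : E →L[ℂ] E) (S : Submodule ℂ E) :
    BddBelow (Set.range fun x : {x : E // x ∈ S ∧ ‖x‖ = 1} =>
      (inner ℂ (x : E) (A (x : E)) : ℂ).re) := by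
  refine ⟨-‖A‖, ?_⟩
  rintro r ⟨⟨x, hxS, hx⟩, rfl⟩
  have h := abs_le.mp (abs_re_inner_le A x x)
  simp only [hx, mul_one] at h
  exact h.1

end aux

/-- The projection lemma (Lemma 1 of Kempe–Kitaev–Regev). -/
theorem projection_lemma
    {E : Type*} [NormedAddCommGroup E] [InnerProductSpace ℂ E]
    [FiniteDimensional ℂ E] [Nontrivial E]
    (H₁ H₂ : E →L[ℂ] E) (hH₁ : IsSelfAdjoint H₁) (hH₂ : IsSelfAdjoint H₂)
    (S : Submodule ℂ E) (hS : S ≠ ⊥)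
    (hker : ∀ x ∈ S, H₂ x = 0)
    (J : ℝ) (hJ : J > 2 * ‖H₁‖)
    (hgap : ∀ x ∈ Sᗮ, J * ‖x‖ ^ 2 ≤ (inner ℂ x (H₂ x) : ℂ).re) :
    groundEnergyOn H₁ S - ‖H₁‖ ^ 2 / (J - 2 * ‖H₁‖) ≤ groundEnergy (H₁ + H₂) ∧
      groundEnergy (H₁ + H₂) ≤ groundEnergyOn H₁ S := by
  have hK0 : (0:ℝ) ≤ ‖H₁‖ := norm_nonneg _
  have hD : (0:ℝ) < J - 2 * ‖H₁‖ := by linarith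
  obtain ⟨y, hyS, hy0⟩ := Submodule.exists_mem_ne_zero_of_ne_bot hS
  have hu₀ : ‖((‖y‖⁻¹ : ℂ) • y)‖ = 1 := norm_smul_inv_norm hy0
  have hu₀S : (‖y‖⁻¹ : ℂ) • y ∈ S := S.smul_mem _ hyS
  haveI inst1 : Nonempty {x : E // x ∈ S ∧ ‖x‖ = 1} := ⟨⟨_, hu₀S, hu₀⟩⟩
  haveI inst2 : Nonempty {x : E // ‖x‖ = 1} := ⟨⟨_, hu₀⟩⟩
  have hlS_le : ∀ x, x ∈ S → ‖x‖ = 1 →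
      groundEnergyOn H₁ S ≤ (inner ℂ x (H₁ x) : ℂ).re := fun x hxS hx =>
    ciInf_le (bddBelow_rayleighOn H₁ S) ⟨x, hxS, hx⟩
  have hlSK : groundEnergyOn H₁ S ≤ ‖H₁‖ := by
    refine (hlS_le _ hu₀S hu₀).trans ?_
    have h := abs_le.mp (abs_re_inner_le H₁ ((‖y‖⁻¹ : ℂ) • y) ((‖y‖⁻¹ : ℂ) • y))
    simp only [hu₀, mul_one] at h
    exact h.2
  have hray : ∀ x₁ ∈ S, groundEnergyOn H₁ S * ‖x₁‖ ^ 2 ≤ (inner ℂ x₁ (H₁ x₁) : ℂ).re := by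
    intro x₁ hx₁S
    rcases eq_or_ne x₁ 0 with h | h
    · simp [h]
    · have hpos : 0 < ‖x₁‖ := norm_pos_iff.mpr h
      have hu : ‖((‖x₁‖⁻¹ : ℂ) • x₁)‖ = 1 := norm_smul_inv_norm h
      have key := hlS_le _ (S.smul_mem (‖x₁‖⁻¹ : ℂ) hx₁S) hu
      rw [map_smul, inner_smul_left, inner_smul_right] at key
      simp only [map_inv₀, Complex.conj_ofReal, ← Complex.ofReal_inv,
        Complex.re_ofReal_mul] at key
      have h2 := mul_le_mul_of_nonneg_right key (sq_nonneg ‖x₁‖)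
      calc groundEnergyOn H₁ S * ‖x₁‖ ^ 2 ≤
            (‖x₁‖⁻¹ * (‖x₁‖⁻¹ * (inner ℂ x₁ (H₁ x₁) : ℂ).re)) * ‖x₁‖ ^ 2 := h2
        _ = (inner ℂ x₁ (H₁ x₁) : ℂ).re := by field_simp
  constructor
  · -- lower bound
    refine le_ciInf ?_
    rintro ⟨x, hx⟩
    set x₁ : E := (S.orthogonalProjectionOnto x : E) with hx₁def
    set x₂ : E := x - x₁ with hx₂def
    have hx₁S : x₁ ∈ S := (S.orthogonalProjectionOnto x).2
    have hx₂o : x₂ ∈ Sᗮ := S.sub_starProjection_mem_orthogonal x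
    have hsum : x = x₁ + x₂ := by rw [hx₂def]; abel
    have horth : (inner ℂ x₁ x₂ : ℂ) = 0 :=
      Submodule.inner_right_of_mem_orthogonal hx₁S hx₂o
    have hnorm : ‖x₁‖ ^ 2 + ‖x₂‖ ^ 2 = 1 := by
      have h := norm_add_sq_eq_norm_sq_add_norm_sq_of_inner_eq_zero x₁ x₂ horth
      rw [← hsum, hx] at h
      rw [pow_two, pow_two]
      norm_num at h
      linarith
    have hH2x₁ : H₂ x₁ = 0 := hker x₁ hx₁S
    have h12 : (inner ℂ x₁ (H₂ x₂) : ℂ) = 0 := by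
      have h := hH₂.isSymmetric x₁ x₂
      simp only [ContinuousLinearMap.coe_coe] at h
      rw [← h, hH2x₁, inner_zero_left]
    have hexp : (inner ℂ x ((H₁ + H₂) x) : ℂ).re =
        (inner ℂ x₁ (H₁ x₁) : ℂ).re + (inner ℂ x₁ (H₁ x₂) : ℂ).re +
        ((inner ℂ x₂ (H₁ x₁) : ℂ).re + (inner ℂ x₂ (H₁ x₂) : ℂ).re) +
        (inner ℂ x₂ (H₂ x₂) : ℂ).re := by
      conv_lhs => rw [hsum]
      simp only [ContinuousLinearMap.add_apply, map_add, inner_add_left, inner_add_right,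
        hH2x₁, h12, inner_zero_right, add_zero, zero_add, Complex.add_re]
      ring
    have hb1 := hray x₁ hx₁S
    have hb2 := (abs_le.mp (abs_re_inner_le H₁ x₁ x₂)).1
    have hb3 := (abs_le.mp (abs_re_inner_le H₁ x₂ x₁)).1
    have hb4 := (abs_le.mp (abs_re_inner_le H₁ x₂ x₂)).1
    have hb5 := hgap x₂ hx₂o
    have ha1 : ‖x₁‖ ≤ 1 := by nlinarith [norm_nonneg x₁, norm_nonneg x₂]
    have hLn : groundEnergyOn H₁ S * ‖x₁‖ ^ 2 + groundEnergyOn H₁ S * ‖x₂‖ ^ 2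
        = groundEnergyOn H₁ S * 1 := by rw [← mul_add, hnorm]
    have hLb : groundEnergyOn H₁ S * ‖x₂‖ ^ 2 ≤ ‖H₁‖ * ‖x₂‖ ^ 2 :=
      mul_le_mul_of_nonneg_right hlSK (sq_nonneg _)
    have hKab : ‖H₁‖ * ‖x₁‖ * ‖x₂‖ ≤ ‖H₁‖ * 1 * ‖x₂‖ :=
      mul_le_mul_of_nonneg_right (mul_le_mul_of_nonneg_left ha1 hK0) (norm_nonneg x₂)
    have hmain : groundEnergyOn H₁ S - (inner ℂ x ((H₁ + H₂) x) : ℂ).re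
        ≤ 2 * ‖H₁‖ * ‖x₂‖ - (J - 2 * ‖H₁‖) * ‖x₂‖ ^ 2 := by
      rw [hexp]; nlinarith [hb1, hb2, hb3, hb4, hb5, hLn, hLb, hKab]
    have key : (groundEnergyOn H₁ S - (inner ℂ x ((H₁ + H₂) x) : ℂ).re) * (J - 2 * ‖H₁‖)
        ≤ ‖H₁‖ ^ 2 := by
      have h2 := mul_le_mul_of_nonneg_right hmain hD.le
      nlinarith [sq_nonneg ((J - 2 * ‖H₁‖) * ‖x₂‖ - ‖H₁‖)]
    have := (le_div_iff₀ hD).mpr key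
    linarith
  · -- upper bound
    refine le_ciInf ?_
    rintro ⟨x, hxS, hx⟩
    have h := ciInf_le (bddBelow_rayleigh (H₁ + H₂)) (⟨x, hx⟩ : {x : E // ‖x‖ = 1})
    simpa [groundEnergy, ContinuousLinearMap.add_apply, hker x hxS] using h
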